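/- For d = 2 and any points x₁,…,x_n ∈ ℕ², Spearman's rho statistic based on mid-ranks admits the copula representation ρ_n = (12/n³) ∑_{i=1}^n (R_{i1} − (n+1)/2)(R_{i2} − (n+1)/2) = 12 ∫₀¹ ∫₀¹ {Ĉ_n^⊞(u,v) − uv} dv du, where for j ∈ {1,2}, R_{ij} = ∑_{m=1}^n 1{x_{mj} < x_{ij}} + (1/2)(∑_{m=1}^n 1{x_{mj} = x_{ij}} + 1) is the mid-rank of x_{ij} among x_{1j},…,x_{nj}. -/

import Mathlib

open MeasureTheory Filter Topology

noncomputable section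

/-- Generalized inverse `F⁻¹(u) = inf {x | F x ≥ u}` of a distribution function,
with the convention `F⁻¹ 0 = -1`. -/
def genInv (F : ℝ → ℝ) (u : ℝ) : ℝ :=
  if u = 0 then -1 else sInf {x : ℝ | u ≤ F x}

/-- Multilinear extension `F^⊞(x) = ∫₀¹ F (x + u) du` of a univariate distribution function. -/
def mlin1 (F : ℝ → ℝ) (x : ℝ) : ℝ := ∫ u in Set.Icc (0:ℝ) 1, F (x + u)

/-- Multilinear extension `H^⊞(x) = ∫_{[0,1]^d} H (x + u) du` of a `d`-variate
distribution function. -/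
def mlin (d : ℕ) (H : (Fin d → ℝ) → ℝ) (x : Fin d → ℝ) : ℝ :=
  ∫ u in Set.Icc (0 : Fin d → ℝ) 1, H (x + u)

/-- The multilinear extension copula `C^⊞(u) = H^⊞(F₁^⊞⁻¹(u₁),…,F_d^⊞⁻¹(u_d))`
of `H` with margins `F`. -/
def mlinCopula (d : ℕ) (H : (Fin d → ℝ) → ℝ) (F : Fin d → ℝ → ℝ) (u : Fin d → ℝ) : ℝ :=
  mlin d H (fun j => genInv (mlin1 (F j)) (u j))

/-- Empirical distribution function of the points `x₁,…,x_n ∈ ℕ^d`. -/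
def empDF (d n : ℕ) (x : Fin n → Fin d → ℕ) (y : Fin d → ℝ) : ℝ :=
  (n : ℝ)⁻¹ * ∑ i : Fin n, if ∀ j, (x i j : ℝ) ≤ y j then (1:ℝ) else 0

/-- Empirical marginal distribution function of the `j`-th coordinates. -/
def empMargin (d n : ℕ) (x : Fin n → Fin d → ℕ) (j : Fin d) (t : ℝ) : ℝ :=
  (n : ℝ)⁻¹ * ∑ i : Fin n, if (x i j : ℝ) ≤ t then (1:ℝ) else 0

/-- The mid-rank `R_{ij}` of `x_{ij}` among `x_{1j},…,x_{nj}`: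
`R_{ij} = ∑_m 1{x_{mj} < x_{ij}} + (1/2)(∑_m 1{x_{mj} = x_{ij}} + 1)`. -/
def midRank (n : ℕ) (x : Fin n → Fin 2 → ℕ) (i : Fin n) (j : Fin 2) : ℝ :=
  ((Finset.univ.filter (fun m : Fin n => x m j < x i j)).card : ℝ)
    + (1 / 2) * (((Finset.univ.filter (fun m : Fin n => x m j = x i j)).card : ℝ) + 1)

def ee (c s : ℝ) : ℝ := min 1 (max 0 (s + 1 - c))

lemma ee_monotone (c : ℝ) : Monotone (ee c) := by
  intro a b hab
  exact min_le_min le_rfl (max_le_max le_rfl (by linarith))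

lemma ee_continuous (c : ℝ) : Continuous (ee c) := by
  unfold ee; fun_prop

lemma ee_nonneg (c s : ℝ) : 0 ≤ ee c s := le_min one_pos.le (le_max_left _ _)

lemma ee_le_one (c s : ℝ) : ee c s ≤ 1 := min_le_left _ _

lemma ee_of_le (c s : ℝ) (h : s ≤ c - 1) : ee c s = 0 := by
  unfold ee
  rw [max_eq_left (by linarith), min_eq_right (by norm_num)]

lemma ee_of_ge (c s : ℝ) (h : c ≤ s) : ee c s = 1 := by
  unfold ee
  rw [max_eq_right (by linarith), min_eq_left (by linarith)]

lemma ee_of_mem (c s : ℝ) (h1 : c - 1 ≤ s) (h2 : s ≤ c) : ee c s = s + 1 - c := by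
  unfold ee
  rw [max_eq_right (by linarith), min_eq_right (by linarith)]

def W (n : ℕ) (c : Fin n → ℕ) (t : ℝ) : ℝ := (n : ℝ)⁻¹ * ∑ m : Fin n, ee (c m) t

lemma W_mono (n : ℕ) (c : Fin n → ℕ) : Monotone (W n c) := by
  intro s t hst
  unfold W
  gcongr
  exact ee_monotone _ hst

lemma W_cont (n : ℕ) (c : Fin n → ℕ) : Continuous (W n c) :=
  continuous_const.mul (continuous_finset_sum _ fun m _ => ee_continuous _)

lemma W_nonneg (n : ℕ) (c : Fin n → ℕ) (t : ℝ) : 0 ≤ W n c t :=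
  mul_nonneg (by positivity) (Finset.sum_nonneg fun m _ => ee_nonneg _ _)

lemma W_le_one (n : ℕ) (c : Fin n → ℕ) (t : ℝ) : W n c t ≤ 1 := by
  unfold W
  rcases Nat.eq_zero_or_pos n with h | h
  · subst h; simp
  · have h1 : ∑ m : Fin n, ee (c m) t ≤ ∑ m : Fin n, (1:ℝ) :=
      Finset.sum_le_sum fun m _ => ee_le_one _ _
    have h2 : ∑ m : Fin n, (1:ℝ) = n := by
      simp
    calc (n:ℝ)⁻¹ * ∑ m : Fin n, ee (c m) t ≤ (n:ℝ)⁻¹ * n := by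
          rw [← h2]; exact mul_le_mul_of_nonneg_left h1 (by positivity)
      _ = 1 := by field_simp

lemma W_zero (n : ℕ) (c : Fin n → ℕ) (t : ℝ) (ht : t ≤ -1) : W n c t = 0 := by
  unfold W
  rw [Finset.sum_eq_zero fun m _ => ee_of_le _ _ (by
    have : (0:ℝ) ≤ (c m : ℝ) := Nat.cast_nonneg _
    linarith), mul_zero]

lemma W_one (n : ℕ) (hn : 0 < n) (c : Fin n → ℕ) (t : ℝ) (ht : ∀ m, (c m : ℝ) ≤ t) :
    W n c t = 1 := by
  unfold W
  rw [Finset.sum_congr rfl fun m _ => ee_of_ge _ _ (ht m)]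
  simp only [Finset.sum_const, Finset.card_univ, Fintype.card_fin, nsmul_eq_mul, mul_one]
  field_simp

lemma exists_W_one (n : ℕ) (hn : 0 < n) (c : Fin n → ℕ) : ∃ t : ℝ, W n c t = 1 := by
  refine ⟨(Finset.univ.sup c : ℕ), W_one n hn c _ fun m => ?_⟩
  exact_mod_cast Nat.cast_le.mpr (Finset.le_sup (Finset.mem_univ m))

lemma W_set_lb (n : ℕ) (c : Fin n → ℕ) (u : ℝ) (hu : 0 < u) :
    ∀ y ∈ {x : ℝ | u ≤ W n c x}, -1 ≤ y := by
  intro y hy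
  by_contra h
  push_neg at h
  have := W_zero n c y h.le
  simp only [Set.mem_setOf_eq, this] at hy
  linarith

lemma genInv_le_iff (n : ℕ) (hn : 0 < n) (c : Fin n → ℕ) (u : ℝ) (hu : 0 < u) (hu1 : u ≤ 1)
    (t : ℝ) : genInv (W n c) u ≤ t ↔ u ≤ W n c t := by
  have hne : u ≠ 0 := ne_of_gt hu
  rw [genInv, if_neg hne]
  have hnonempty : {x : ℝ | u ≤ W n c x}.Nonempty := by
    obtain ⟨t0, ht0⟩ := exists_W_one n hn c
    exact ⟨t0, by simp [Set.mem_setOf_eq, ht0, hu1]⟩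
  have hbdd : BddBelow {x : ℝ | u ≤ W n c x} := ⟨-1, fun y hy => W_set_lb n c u hu y hy⟩
  have hclosed : IsClosed {x : ℝ | u ≤ W n c x} := isClosed_le continuous_const (W_cont n c)
  constructor
  · intro h
    have hmem := hclosed.csInf_mem hnonempty hbdd
    exact le_trans hmem (W_mono n c h)
  · intro h
    exact csInf_le hbdd h

lemma W_genInv (n : ℕ) (hn : 0 < n) (c : Fin n → ℕ) (u : ℝ) (hu : 0 < u) (hu1 : u ≤ 1) :
    W n c (genInv (W n c) u) = u := by
  set q := genInv (W n c) u with hq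
  have h1 : u ≤ W n c q := (genInv_le_iff n hn c u hu hu1 q).mp le_rfl
  have h2 : W n c q ≤ u := by
    have hlt : ∀ t, t < q → W n c t < u := by
      intro t ht
      by_contra h
      push_neg at h
      exact absurd ((genInv_le_iff n hn c u hu hu1 t).mpr h) (not_le.mpr ht)
    have htend : Tendsto (fun k : ℕ => W n c (q - 1/(k+1))) atTop (𝓝 (W n c q)) := by
      refine ((W_cont n c).tendsto q).comp ?_
      have : Tendsto (fun k : ℕ => 1/((k:ℝ)+1)) atTop (𝓝 0) := tendsto_one_div_add_atTop_nhds_zero_nat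
      simpa using tendsto_const_nhds.sub this
    refine le_of_tendsto htend (Eventually.of_forall fun k => ?_)
    have hk : (0:ℝ) < 1/((k:ℝ)+1) := by positivity
    exact (hlt _ (by linarith)).le
  linarith

lemma genInv_monotoneOn (n : ℕ) (hn : 0 < n) (c : Fin n → ℕ) :
    MonotoneOn (genInv (W n c)) (Set.Icc (0:ℝ) 1) := by
  intro u hu v hv huv
  have hlb : ∀ w : ℝ, 0 < w → w ≤ 1 → -1 ≤ genInv (W n c) w := by
    intro w hw hw1
    rw [genInv, if_neg (ne_of_gt hw)]
    obtain ⟨t0, ht0⟩ := exists_W_one n hn c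
    exact le_csInf ⟨t0, by simp [Set.mem_setOf_eq, ht0, hw1]⟩ (W_set_lb n c w hw)
  rcases eq_or_lt_of_le hu.1 with h0 | h0
  · have hgu : genInv (W n c) u = -1 := by rw [genInv, if_pos h0.symm]
    rw [hgu]
    rcases eq_or_lt_of_le hv.1 with h1 | h1
    · rw [genInv, if_pos h1.symm]
    · exact hlb v h1 hv.2
  · have hv0 : 0 < v := lt_of_lt_of_le h0 huv
    rw [genInv, if_neg (ne_of_gt h0), genInv, if_neg (ne_of_gt hv0)]
    obtain ⟨t0, ht0⟩ := exists_W_one n hn c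
    refine csInf_le_csInf ⟨-1, fun y hy => W_set_lb n c u h0 y hy⟩
      ⟨t0, by simp [Set.mem_setOf_eq, ht0, hv.2]⟩ ?_
    intro y hy
    exact le_trans huv hy


lemma W_linear (n : ℕ) (c : Fin n → ℕ) (k : ℕ) (q : ℝ)
    (h1 : (k:ℝ) - 1 ≤ q) (h2 : q ≤ k) :
    W n c q - W n c ((k:ℝ) - 1) = (q - ((k:ℝ) - 1)) * (W n c k - W n c ((k:ℝ) - 1)) := by
  have key : ∀ m : Fin n, ee (c m) q - ee (c m) ((k:ℝ)-1)
      = (q - ((k:ℝ)-1)) * (ee (c m) k - ee (c m) ((k:ℝ)-1)) := by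
    intro m
    rcases lt_trichotomy (c m) k with h | h | h
    · have hc : (c m : ℝ) ≤ (k:ℝ) - 1 := by
        have : (c m : ℝ) + 1 ≤ k := by exact_mod_cast Nat.succ_le_of_lt h
        linarith
      rw [ee_of_ge _ _ (by linarith), ee_of_ge _ _ (by linarith), ee_of_ge _ _ (by linarith)]
      ring
    · subst h
      rw [ee_of_mem _ _ (by linarith) h2, ee_of_le _ _ (by linarith), ee_of_ge _ _ le_rfl]
      ring
    · have hc : (k:ℝ) + 1 ≤ (c m : ℝ) := by exact_mod_cast Nat.succ_le_of_lt h
      rw [ee_of_le _ _ (by linarith), ee_of_le _ _ (by linarith), ee_of_le _ _ (by linarith)]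
      ring
  unfold W
  rw [← mul_sub, ← mul_sub, ← Finset.sum_sub_distrib, ← Finset.sum_sub_distrib,
    Finset.sum_congr rfl (fun m _ => key m), Finset.mul_sum, Finset.mul_sum,
    Finset.mul_sum]
  exact Finset.sum_congr rfl fun m _ => by ring

def psi (a b u : ℝ) : ℝ := if u ≤ a then 0 else if b ≤ u then 1 else (u - a)/(b - a)

lemma ee_genInv_eq_psi (n : ℕ) (hn : 0 < n) (c : Fin n → ℕ) (k : ℕ) (u : ℝ)
    (hu : 0 < u) (hu1 : u ≤ 1)
    (ha : u ≠ W n c ((k:ℝ) - 1)) (hb : u ≠ W n c k) :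
    ee k (genInv (W n c) u) = psi (W n c ((k:ℝ) - 1)) (W n c k) u := by
  set a := W n c ((k:ℝ) - 1) with hadef
  set b := W n c k with hbdef
  have hab : a ≤ b := W_mono n c (by linarith)
  set q := genInv (W n c) u with hqdef
  have hWq : W n c q = u := W_genInv n hn c u hu hu1
  rcases lt_trichotomy u a with h | h | h
  · -- u < a : q < k - 1, ee = 0
    have hq : q < (k:ℝ) - 1 := by
      by_contra hc
      push_neg at hc
      have := W_mono n c hc
      rw [hWq] at this
      linarith
    rw [ee_of_le _ _ (by linarith), psi, if_pos h.le]
  · exact absurd h ha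
  · rcases lt_trichotomy u b with h2 | h2 | h2
    · -- a < u < b
      have hq1 : (k:ℝ) - 1 ≤ q := by
        by_contra hc
        push_neg at hc
        have := W_mono n c hc.le
        rw [hWq] at this
        linarith
      have hq2 : q ≤ (k:ℝ) := by
        by_contra hc
        push_neg at hc
        have := W_mono n c hc.le
        rw [hWq] at this
        linarith
      have hlin := W_linear n c k q hq1 hq2
      rw [hWq] at hlin
      have hba : 0 < b - a := by linarith
      have hqval : q - ((k:ℝ) - 1) = (u - a)/(b - a) := by
        field_simp
        rw [← hadef, ← hbdef] at hlin
        linarith [hlin]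
      rw [ee_of_mem _ _ hq1 hq2, psi, if_neg (by linarith), if_neg (by linarith)]
      rw [show (q:ℝ) + 1 - k = q - ((k:ℝ) - 1) by ring, hqval]
    · exact absurd h2 hb
    · -- u > b : q > k, ee = 1
      have hq : (k:ℝ) < q := by
        by_contra hc
        push_neg at hc
        have := W_mono n c hc
        rw [hWq] at this
        linarith
      rw [ee_of_ge _ _ hq.le, psi, if_neg (by linarith), if_pos (by linarith)]

lemma psi_nonneg {a b : ℝ} (hab : a ≤ b) (u : ℝ) : 0 ≤ psi a b u := by
  unfold psi
  split_ifs with h1 h2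
  · exact le_rfl
  · norm_num
  · push_neg at h1 h2
    apply div_nonneg (by linarith) (by linarith)

lemma psi_le_one {a b : ℝ} (hab : a ≤ b) (u : ℝ) : psi a b u ≤ 1 := by
  unfold psi
  split_ifs with h1 h2
  · norm_num
  · exact le_rfl
  · push_neg at h1 h2
    rw [div_le_one (by linarith)]
    linarith

lemma psi_monotone {a b : ℝ} (hab : a ≤ b) : Monotone (psi a b) := by
  intro u v huv
  by_cases hva : v ≤ a
  · have hua : u ≤ a := le_trans huv hva
    unfold psi
    rw [if_pos hua, if_pos hva]
  · by_cases hua : u ≤ a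
    · show psi a b u ≤ psi a b v
      rw [show psi a b u = 0 from if_pos hua]
      exact psi_nonneg hab v
    · by_cases hbu : b ≤ u
      · have hbv : b ≤ v := le_trans hbu huv
        unfold psi
        rw [if_neg hua, if_pos hbu, if_neg hva, if_pos hbv]
      · push_neg at hua hbu hva
        have hba : (0:ℝ) < b - a := by linarith
        have hu' : psi a b u = (u - a)/(b - a) := by
          unfold psi
          rw [if_neg (not_le.mpr hua), if_neg (not_le.mpr hbu)]
        rw [show psi a b u = (u - a)/(b - a) from hu']
        by_cases hbv : b ≤ v
        · rw [show psi a b v = 1 by unfold psi; rw [if_neg (not_le.mpr hva), if_pos hbv]]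
          rw [div_le_one hba]
          linarith
        · rw [show psi a b v = (v - a)/(b - a) by
            unfold psi; rw [if_neg (not_le.mpr hva), if_neg hbv]]
          gcongr

lemma psi_integral {a b : ℝ} (ha : 0 ≤ a) (hab : a ≤ b) (hb : b ≤ 1) :
    ∫ u in (0:ℝ)..1, psi a b u = 1 - (a + b)/2 := by
  have hpm := psi_monotone hab
  have int1 : IntervalIntegrable (psi a b) volume 0 a := hpm.intervalIntegrable
  have int2 : IntervalIntegrable (psi a b) volume a b := hpm.intervalIntegrable
  have int3 : IntervalIntegrable (psi a b) volume b 1 := hpm.intervalIntegrable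
  rw [← intervalIntegral.integral_add_adjacent_intervals (int1.trans int2) int3,
    ← intervalIntegral.integral_add_adjacent_intervals int1 int2]
  have h1 : ∫ u in (0:ℝ)..a, psi a b u = 0 := by
    rw [intervalIntegral.integral_congr (g := fun _ => (0:ℝ)) ?_, intervalIntegral.integral_const,
      smul_zero]
    intro u hu
    rw [Set.uIcc_of_le ha] at hu
    exact if_pos hu.2
  have h2 : ∫ u in (a:ℝ)..b, psi a b u = (b - a)/2 := by
    rcases eq_or_lt_of_le hab with h | h
    · rw [← h]
      simp
    · have hba : b - a ≠ 0 := by linarith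
      have heq : ∫ u in (a:ℝ)..b, psi a b u = ∫ u in (a:ℝ)..b, (u - a) * (b - a)⁻¹ := by
        apply intervalIntegral.integral_congr
        intro u hu
        rw [Set.uIcc_of_le hab] at hu
        unfold psi
        split_ifs with h3 h4
        · have : u = a := le_antisymm h3 hu.1
          simp [this]
        · have : u = b := le_antisymm hu.2 h4
          field_simp [this]
          rw [this]
        · rw [div_eq_mul_inv]
      rw [heq, intervalIntegral.integral_mul_const,
        intervalIntegral.integral_sub intervalIntegral.intervalIntegrable_id
          intervalIntegrable_const,
        integral_id, intervalIntegral.integral_const, smul_eq_mul]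
      field_simp
      ring
  have h3 : ∫ u in (b:ℝ)..1, psi a b u = 1 - b := by
    rw [intervalIntegral.integral_of_le hb,
      setIntegral_congr_fun measurableSet_Ioc (g := fun _ => (1:ℝ)) ?_]
    · rw [setIntegral_const, measureReal_def, Real.volume_Ioc, smul_eq_mul, mul_one,
        ENNReal.toReal_ofReal (by linarith)]
    · intro u hu
      unfold psi
      rw [if_neg (by push_neg; exact lt_of_le_of_lt hab hu.1), if_pos hu.1.le]
  rw [h1, h2, h3]
  ring

lemma ae_ne (a : ℝ) : ∀ᵐ u : ℝ ∂volume, u ≠ a := by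
  rw [ae_iff]
  have : {u : ℝ | ¬u ≠ a} = {a} := by ext u; simp
  rw [this]
  exact Real.volume_singleton

lemma integral_ee_genInv (n : ℕ) (hn : 0 < n) (c : Fin n → ℕ) (k : ℕ) :
    ∫ u in (0:ℝ)..1, ee k (genInv (W n c) u)
      = 1 - (W n c ((k:ℝ) - 1) + W n c k)/2 := by
  set a := W n c ((k:ℝ) - 1) with hadef
  set b := W n c k with hbdef
  have hab : a ≤ b := W_mono n c (by linarith)
  have ha0 : 0 ≤ a := W_nonneg n c _
  have hb1 : b ≤ 1 := W_le_one n c _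
  have key : ∫ u in (0:ℝ)..1, ee k (genInv (W n c) u) = ∫ u in (0:ℝ)..1, psi a b u := by
    rw [intervalIntegral.integral_of_le (by norm_num : (0:ℝ) ≤ 1),
      intervalIntegral.integral_of_le (by norm_num : (0:ℝ) ≤ 1)]
    apply integral_congr_ae
    filter_upwards [ae_restrict_of_ae (ae_ne a), ae_restrict_of_ae (ae_ne b),
      ae_restrict_mem measurableSet_Ioc] with u hua hub hu
    exact ee_genInv_eq_psi n hn c k u hu.1 hu.2 hua hub
  rw [key, psi_integral ha0 hab hb1]

lemma intervalIntegrable_ee_genInv (n : ℕ) (hn : 0 < n) (c : Fin n → ℕ) (k : ℕ) :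
    IntervalIntegrable (fun u => ee k (genInv (W n c) u)) volume 0 1 := by
  apply MonotoneOn.intervalIntegrable
  rw [Set.uIcc_of_le (by norm_num : (0:ℝ) ≤ 1)]
  intro u hu v hv huv
  exact ee_monotone _ (genInv_monotoneOn n hn c hu hv huv)

lemma W_at_nat (n : ℕ) (c : Fin n → ℕ) (k : ℕ) :
    W n c ((k:ℝ) - 1) = (n:ℝ)⁻¹ * ((Finset.univ.filter (fun m => c m < k)).card : ℝ)
    ∧ W n c (k:ℝ) = (n:ℝ)⁻¹ * (((Finset.univ.filter (fun m => c m < k)).card : ℝ)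
        + ((Finset.univ.filter (fun m => c m = k)).card : ℝ)) := by
  constructor
  · unfold W
    congr 1
    rw [Finset.card_filter, Nat.cast_sum]
    refine Finset.sum_congr rfl fun m _ => ?_
    rcases lt_or_ge (c m) k with h | h
    · have : (c m : ℝ) + 1 ≤ k := by exact_mod_cast Nat.succ_le_of_lt h
      rw [ee_of_ge _ _ (by linarith), if_pos h]
      simp
    · have : (k:ℝ) ≤ (c m : ℝ) := by exact_mod_cast h
      rw [ee_of_le _ _ (by linarith), if_neg (not_lt.mpr h)]
      simp
  · unfold W
    congr 1
    rw [Finset.card_filter, Finset.card_filter, Nat.cast_sum, Nat.cast_sum,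
      ← Finset.sum_add_distrib]
    refine Finset.sum_congr rfl fun m _ => ?_
    rcases lt_trichotomy (c m) k with h | h | h
    · have : (c m : ℝ) ≤ k := by exact_mod_cast h.le
      rw [ee_of_ge _ _ this, if_pos h, if_neg (ne_of_lt h)]
      simp
    · rw [ee_of_ge _ _ (by exact_mod_cast h.le), if_neg (by omega), if_pos h]
      simp
    · have : (k:ℝ) + 1 ≤ (c m : ℝ) := by exact_mod_cast Nat.succ_le_of_lt h
      rw [ee_of_le _ _ (by linarith), if_neg (by omega), if_neg (by omega)]
      simp

lemma integral_ind (c s : ℝ) :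
    ∫ u in Set.Icc (0:ℝ) 1, (if c ≤ s + u then (1:ℝ) else 0) = ee c s := by
  have h1 : ∀ u : ℝ, (if c ≤ s + u then (1:ℝ) else 0)
      = Set.indicator (Set.Ici (c - s)) (fun _ => (1:ℝ)) u := by
    intro u
    simp only [Set.indicator_apply, Set.mem_Ici]
    congr 1
    simp only [eq_iff_iff]
    constructor <;> intro h <;> linarith
  simp_rw [h1]
  rw [setIntegral_indicator measurableSet_Ici, setIntegral_const, smul_eq_mul, mul_one]
  have : Set.Icc (0:ℝ) 1 ∩ Set.Ici (c - s) = Set.Icc (max 0 (c - s)) 1 := by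
    ext t
    simp only [Set.mem_inter_iff, Set.mem_Icc, Set.mem_Ici, max_le_iff]
    tauto
  rw [this, measureReal_def, Real.volume_Icc]
  rcases le_total (c - s) 0 with h | h
  · rw [max_eq_left h, ee_of_ge c s (by linarith)]
    simp
  · rw [max_eq_right h]
    rcases le_total (c - s) 1 with h2 | h2
    · rw [ENNReal.toReal_ofReal (by linarith), ee_of_mem c s (by linarith) (by linarith)]
      ring
    · rw [ee_of_le c s (by linarith), ENNReal.ofReal_eq_zero.mpr (by linarith)]
      simp

lemma ind_integrableOn (a : ℝ) (s : Set ℝ) (hs : volume s ≠ ⊤) :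
    IntegrableOn (fun u : ℝ => if a ≤ u then (1:ℝ) else 0) s := by
  have h : (fun u : ℝ => if a ≤ u then (1:ℝ) else 0)
      = Set.indicator (Set.Ici a) (fun _ => (1:ℝ)) := by
    ext u; simp [Set.indicator_apply]
  rw [h]
  exact (integrableOn_const hs).indicator measurableSet_Ici


lemma integral_box_sum_mul (n : ℕ) (G H : Fin n → ℝ → ℝ)
    (hG : ∀ i, IntegrableOn (G i) (Set.Icc (0:ℝ) 1))
    (hH : ∀ i, IntegrableOn (H i) (Set.Icc (0:ℝ) 1)) :
    ∫ u in Set.Icc (0 : Fin 2 → ℝ) 1, ∑ i : Fin n, G i (u 0) * H i (u 1)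
      = ∑ i : Fin n, (∫ s in Set.Icc (0:ℝ) 1, G i s) * ∫ s in Set.Icc (0:ℝ) 1, H i s := by
  have hmp := MeasureTheory.volume_preserving_finTwoArrow ℝ
  have hemb := (MeasurableEquiv.finTwoArrow : (Fin 2 → ℝ) ≃ᵐ ℝ × ℝ).measurableEmbedding
  have hbox : Set.Icc (0 : Fin 2 → ℝ) 1
      = (MeasurableEquiv.finTwoArrow : (Fin 2 → ℝ) ≃ᵐ ℝ × ℝ) ⁻¹'
        (Set.Icc (0:ℝ) 1 ×ˢ Set.Icc (0:ℝ) 1) := by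
    ext u
    simp only [Set.mem_Icc, Set.mem_preimage, Set.mem_prod, Pi.le_def]
    constructor
    · rintro ⟨h0, h1⟩
      exact ⟨⟨h0 0, h1 0⟩, ⟨h0 1, h1 1⟩⟩
    · rintro ⟨⟨a0, a1⟩, ⟨b0, b1⟩⟩
      constructor <;> intro j <;> fin_cases j <;> simpa
  rw [hbox]
  refine (hmp.setIntegral_preimage_emb hemb
    (fun p : ℝ × ℝ => ∑ i : Fin n, G i p.1 * H i p.2) _).trans ?_
  rw [Measure.volume_eq_prod, integral_finset_sum]
  · exact Finset.sum_congr rfl fun i _ => setIntegral_prod_mul (G i) (H i) _ _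
  · intro i _
    rw [← Measure.prod_restrict]
    exact (hG i).mul_prod (hH i)

lemma integral_ind' (c s : ℝ) :
    ∫ u in Set.Icc (0:ℝ) 1, (if c - s ≤ u then (1:ℝ) else 0) = ee c s := by
  rw [← integral_ind c s]
  refine setIntegral_congr_fun measurableSet_Icc fun u _ => ?_
  congr 1
  simp only [eq_iff_iff]
  constructor <;> intro h <;> linarith

lemma mlin1_empMargin (d n : ℕ) (x : Fin n → Fin d → ℕ) (j : Fin d) :
    mlin1 (empMargin d n x j) = W n (fun m => x m j) := by
  funext t
  unfold mlin1 empMargin W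
  rw [integral_const_mul]
  congr 1
  rw [integral_finset_sum]
  · exact Finset.sum_congr rfl fun m _ => integral_ind _ t
  · intro m _
    have h : (fun u : ℝ => if ((x m j : ℝ)) ≤ t + u then (1:ℝ) else 0)
        = fun u : ℝ => if ((x m j : ℝ) - t) ≤ u then (1:ℝ) else 0 := by
      ext u
      congr 1
      simp only [eq_iff_iff]
      constructor <;> intro h <;> linarith
    rw [h]
    exact ind_integrableOn _ _ (by simp [Real.volume_Icc])

lemma mlin_empDF (n : ℕ) (x : Fin n → Fin 2 → ℕ) (y : Fin 2 → ℝ) :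
    mlin 2 (empDF 2 n x) y
      = (n:ℝ)⁻¹ * ∑ i : Fin n, ee (x i 0) (y 0) * ee (x i 1) (y 1) := by
  unfold mlin empDF
  have key : ∀ u : Fin 2 → ℝ,
      ((n:ℝ)⁻¹ * ∑ i : Fin n, if ∀ j, (x i j : ℝ) ≤ (y + u) j then (1:ℝ) else 0)
      = (n:ℝ)⁻¹ * ∑ i : Fin n,
          (if ((x i 0 : ℝ) - y 0) ≤ u 0 then (1:ℝ) else 0)
          * (if ((x i 1 : ℝ) - y 1) ≤ u 1 then (1:ℝ) else 0) := by
    intro u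
    congr 1
    refine Finset.sum_congr rfl fun i _ => ?_
    have e0 : ((x i 0:ℝ) ≤ (y + u) 0) ↔ ((x i 0:ℝ) - y 0 ≤ u 0) := by
      simp only [Pi.add_apply]
      constructor <;> intro h <;> linarith
    have e1 : ((x i 1:ℝ) ≤ (y + u) 1) ↔ ((x i 1:ℝ) - y 1 ≤ u 1) := by
      simp only [Pi.add_apply]
      constructor <;> intro h <;> linarith
    simp only [Fin.forall_fin_two, e0, e1]
    by_cases h0 : (x i 0:ℝ) - y 0 ≤ u 0 <;> by_cases h1 : (x i 1:ℝ) - y 1 ≤ u 1 <;>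
      simp [h0, h1]
  simp_rw [key]
  rw [integral_const_mul]
  congr 1
  rw [integral_box_sum_mul n _ _
    (fun i => ind_integrableOn _ _ (by simp [Real.volume_Icc]))
    (fun i => ind_integrableOn _ _ (by simp [Real.volume_Icc]))]
  exact Finset.sum_congr rfl fun i _ => by rw [integral_ind', integral_ind']

lemma copula_formula (n : ℕ) (x : Fin n → Fin 2 → ℕ) (u v : ℝ) :
    mlinCopula 2 (empDF 2 n x) (empMargin 2 n x) ![u, v]
      = (n:ℝ)⁻¹ * ∑ i : Fin n,
          ee (x i 0) (genInv (W n (fun m => x m 0)) u)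
          * ee (x i 1) (genInv (W n (fun m => x m 1)) v) := by
  unfold mlinCopula
  rw [mlin_empDF]
  congr 1
  refine Finset.sum_congr rfl fun i _ => ?_
  rw [mlin1_empMargin, mlin1_empMargin]
  simp [Matrix.cons_val_zero, Matrix.cons_val_one, Matrix.head_cons]

lemma midRank_card (n : ℕ) (x : Fin n → Fin 2 → ℕ) (i : Fin n) (j : Fin 2) :
    midRank n x i j - 1/2
      = ((Finset.univ.filter (fun m : Fin n => x m j < x i j)).card : ℝ)
        + ((Finset.univ.filter (fun m : Fin n => x m j = x i j)).card : ℝ)/2 := by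
  unfold midRank
  ring

lemma midRank_sum (n : ℕ) (x : Fin n → Fin 2 → ℕ) (j : Fin 2) :
    ∑ i : Fin n, (midRank n x i j - 1/2) = (n:ℝ)^2/2 := by
  have hsum : ∑ i : Fin n, (midRank n x i j - 1/2)
      = ∑ i : Fin n, ∑ m : Fin n,
          ((if x m j < x i j then (1:ℝ) else 0) + (1/2) * (if x m j = x i j then (1:ℝ) else 0)) := by
    refine Finset.sum_congr rfl fun i _ => ?_
    rw [midRank_card, Finset.sum_add_distrib, Finset.card_filter, Finset.card_filter,
      Nat.cast_sum, Nat.cast_sum, ← Finset.mul_sum]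
    simp only [Nat.cast_ite, Nat.cast_one, Nat.cast_zero]
    ring
  rw [hsum]
  have hpair : ∀ i m : Fin n,
      ((if x m j < x i j then (1:ℝ) else 0) + (1/2) * (if x m j = x i j then (1:ℝ) else 0))
      + ((if x i j < x m j then (1:ℝ) else 0) + (1/2) * (if x i j = x m j then (1:ℝ) else 0))
      = 1 := by
    intro i m
    rcases lt_trichotomy (x m j) (x i j) with h | h | h
    · rw [if_pos h, if_neg (ne_of_lt h), if_neg (not_lt.mpr h.le), if_neg (ne_of_gt h)]
      ring
    · rw [if_neg (by omega), if_pos h, if_neg (by omega), if_pos h.symm]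
      ring
    · rw [if_neg (not_lt.mpr h.le), if_neg (ne_of_gt h), if_pos h, if_neg (ne_of_lt h)]
      ring
  have h2 : (∑ i : Fin n, ∑ m : Fin n,
      ((if x m j < x i j then (1:ℝ) else 0) + (1/2) * (if x m j = x i j then (1:ℝ) else 0)))
      * 2 = (n:ℝ)^2 := by
    have hcomm : ∑ i : Fin n, ∑ m : Fin n,
        ((if x m j < x i j then (1:ℝ) else 0) + (1/2) * (if x m j = x i j then (1:ℝ) else 0))
        = ∑ i : Fin n, ∑ m : Fin n,
        ((if x i j < x m j then (1:ℝ) else 0) + (1/2) * (if x i j = x m j then (1:ℝ) else 0)) :=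
      Finset.sum_comm
    calc (∑ i : Fin n, ∑ m : Fin n,
        ((if x m j < x i j then (1:ℝ) else 0) + (1/2) * (if x m j = x i j then (1:ℝ) else 0))) * 2
        = (∑ i : Fin n, ∑ m : Fin n,
          ((if x m j < x i j then (1:ℝ) else 0) + (1/2) * (if x m j = x i j then (1:ℝ) else 0)))
          + (∑ i : Fin n, ∑ m : Fin n,
          ((if x i j < x m j then (1:ℝ) else 0) + (1/2) * (if x i j = x m j then (1:ℝ) else 0))) := by
          rw [← hcomm]; ring
      _ = ∑ i : Fin n, ∑ m : Fin n, (1:ℝ) := by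
          rw [← Finset.sum_add_distrib]
          refine Finset.sum_congr rfl fun i _ => ?_
          rw [← Finset.sum_add_distrib]
          exact Finset.sum_congr rfl fun m _ => hpair i m
      _ = (n:ℝ)^2 := by simp; ring
  linarith


lemma intervalIntegrable_comb (n : ℕ) (hn : 0 < n) (c : Fin n → ℕ) (k : Fin n → ℕ)
    (coef : Fin n → ℝ) (hcoef : ∀ i, 0 ≤ coef i) :
    IntervalIntegrable
      (fun v => (n:ℝ)⁻¹ * ∑ i : Fin n, coef i * ee (k i) (genInv (W n c) v)) volume 0 1 := by
  apply MonotoneOn.intervalIntegrable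
  rw [Set.uIcc_of_le (by norm_num : (0:ℝ) ≤ 1)]
  intro u hu v hv huv
  refine mul_le_mul_of_nonneg_left ?_ (by positivity)
  refine Finset.sum_le_sum fun i _ => ?_
  exact mul_le_mul_of_nonneg_left (ee_monotone _ (genInv_monotoneOn n hn c hu hv huv)) (hcoef i)


/-- Spearman's rho statistic based on mid-ranks admits the copula
representation `ρ_n = (12/n³) ∑_i (R_{i1} − (n+1)/2)(R_{i2} − (n+1)/2)
= 12 ∫₀¹∫₀¹ {Ĉ_n^⊞(u,v) − uv} dv du`. -/
theorem spearman_rho_copula_representation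
    (n : ℕ) (hn : 0 < n) (x : Fin n → Fin 2 → ℕ) :
    (12 / (n : ℝ) ^ 3)
        * ∑ i : Fin n,
            (midRank n x i 0 - ((n : ℝ) + 1) / 2) * (midRank n x i 1 - ((n : ℝ) + 1) / 2)
      = 12 * ∫ u in (0:ℝ)..1, ∫ v in (0:ℝ)..1,
          (mlinCopula 2 (empDF 2 n x) (empMargin 2 n x) ![u, v] - u * v) := by
  have hn' : (n:ℝ) ≠ 0 := Nat.cast_ne_zero.mpr hn.ne'
  set c0 : Fin n → ℕ := fun m => x m 0 with hc0
  set c1 : Fin n → ℕ := fun m => x m 1 with hc1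
  -- abbreviations for the marginal values
  set B0 : Fin n → ℝ := fun i => 1 - (W n c0 ((x i 0:ℝ) - 1) + W n c0 (x i 0))/2 with hB0
  set B1 : Fin n → ℝ := fun i => 1 - (W n c1 ((x i 1:ℝ) - 1) + W n c1 (x i 1))/2 with hB1
  have hB0nn : ∀ i, 0 ≤ B0 i := fun i => by
    have := W_le_one n c0 ((x i 0:ℝ) - 1)
    have := W_le_one n c0 (x i 0)
    simp only [hB0]
    linarith
  have hB1nn : ∀ i, 0 ≤ B1 i := fun i => by
    have := W_le_one n c1 ((x i 1:ℝ) - 1)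
    have := W_le_one n c1 (x i 1)
    simp only [hB1]
    linarith
  have hBval : ∀ (j : Fin 2) (i : Fin n),
      1 - (W n (fun m => x m j) ((x i j:ℝ) - 1) + W n (fun m => x m j) (x i j))/2
      = 1 - (midRank n x i j - 1/2)/n := by
    intro j i
    obtain ⟨hwa, hwb⟩ := W_at_nat n (fun m => x m j) (x i j)
    rw [hwa, hwb, midRank_card]
    field_simp
    ring
  -- inner integral
  have hinner : ∀ u : ℝ,
      (∫ v in (0:ℝ)..1, (mlinCopula 2 (empDF 2 n x) (empMargin 2 n x) ![u, v] - u * v))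
      = (n:ℝ)⁻¹ * ∑ i : Fin n, B1 i * ee (x i 0) (genInv (W n c0) u) - u/2 := by
    intro u
    have hint1 : IntervalIntegrable
        (fun v => mlinCopula 2 (empDF 2 n x) (empMargin 2 n x) ![u, v]) volume 0 1 := by
      have heq : (fun v => mlinCopula 2 (empDF 2 n x) (empMargin 2 n x) ![u, v])
          = fun v => (n:ℝ)⁻¹ * ∑ i : Fin n, ee (x i 0) (genInv (W n c0) u)
              * ee (x i 1) (genInv (W n c1) v) := funext fun v => copula_formula n x u v
      rw [heq]
      exact intervalIntegrable_comb n hn c1 (fun i => x i 1)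
        (fun i => ee (x i 0) (genInv (W n c0) u)) (fun i => ee_nonneg _ _)
    have hint2 : IntervalIntegrable (fun v => u * v) volume 0 1 :=
      (continuous_const.mul continuous_id).intervalIntegrable 0 1
    rw [intervalIntegral.integral_sub hint1 hint2]
    have hpart1 : (∫ v in (0:ℝ)..1, mlinCopula 2 (empDF 2 n x) (empMargin 2 n x) ![u, v])
        = (n:ℝ)⁻¹ * ∑ i : Fin n, B1 i * ee (x i 0) (genInv (W n c0) u) := by
      simp_rw [copula_formula n x u]
      rw [intervalIntegral.integral_const_mul]
      congr 1
      rw [intervalIntegral.integral_finset_sum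
        (fun i _ => (intervalIntegrable_ee_genInv n hn c1 (x i 1)).const_mul _)]
      refine Finset.sum_congr rfl fun i _ => ?_
      rw [intervalIntegral.integral_const_mul, integral_ee_genInv n hn c1 (x i 1)]
      simp only [hB1]
      ring
    have hpart2 : (∫ v in (0:ℝ)..1, u * v) = u/2 := by
      rw [intervalIntegral.integral_const_mul, integral_id]
      ring
    rw [hpart1, hpart2]
  -- outer integral
  have houter : (∫ u in (0:ℝ)..1, ∫ v in (0:ℝ)..1,
        (mlinCopula 2 (empDF 2 n x) (empMargin 2 n x) ![u, v] - u * v))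
      = (n:ℝ)⁻¹ * ∑ i : Fin n, B1 i * B0 i - 1/4 := by
    simp_rw [hinner]
    have hint1 : IntervalIntegrable
        (fun u => (n:ℝ)⁻¹ * ∑ i : Fin n, B1 i * ee (x i 0) (genInv (W n c0) u)) volume 0 1 :=
      intervalIntegrable_comb n hn c0 (fun i => x i 0) B1 hB1nn
    have hint2 : IntervalIntegrable (fun u : ℝ => u/2) volume 0 1 :=
      (continuous_id.div_const 2).intervalIntegrable 0 1
    rw [intervalIntegral.integral_sub hint1 hint2]
    have hpart1 : (∫ u in (0:ℝ)..1, (n:ℝ)⁻¹ * ∑ i : Fin n, B1 i * ee (x i 0) (genInv (W n c0) u))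
        = (n:ℝ)⁻¹ * ∑ i : Fin n, B1 i * B0 i := by
      rw [intervalIntegral.integral_const_mul]
      congr 1
      rw [intervalIntegral.integral_finset_sum
        (fun i _ => (intervalIntegrable_ee_genInv n hn c0 (x i 0)).const_mul _)]
      refine Finset.sum_congr rfl fun i _ => ?_
      rw [intervalIntegral.integral_const_mul, integral_ee_genInv n hn c0 (x i 0)]
    have hpart2 : (∫ u in (0:ℝ)..1, u/2) = 1/4 := by
      rw [intervalIntegral.integral_div, integral_id]
      norm_num
    rw [hpart1, hpart2]
  rw [houter]
  -- replace B by mid-ranks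
  have hBB : ∑ i : Fin n, B1 i * B0 i
      = ∑ i : Fin n, (1 - (midRank n x i 0 - 1/2)/n) * (1 - (midRank n x i 1 - 1/2)/n) := by
    refine Finset.sum_congr rfl fun i _ => ?_
    rw [hB0, hB1]
    simp only
    rw [hBval 0 i, hBval 1 i]
    ring
  rw [hBB]
  -- final algebra
  have hs0 := midRank_sum n x 0
  have hs1 := midRank_sum n x 1
  set T : ℝ := ∑ i : Fin n, (midRank n x i 0 - 1/2) * (midRank n x i 1 - 1/2) with hT
  have h1 : ∑ i : Fin n, (midRank n x i 0 - ((n:ℝ) + 1)/2) * (midRank n x i 1 - ((n:ℝ) + 1)/2)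
      = T - (n:ℝ)^3/4 := by
    have e1 : ∀ i : Fin n, (midRank n x i 0 - ((n:ℝ) + 1)/2) * (midRank n x i 1 - ((n:ℝ) + 1)/2)
        = (midRank n x i 0 - 1/2) * (midRank n x i 1 - 1/2)
          - (n:ℝ)/2 * (midRank n x i 0 - 1/2) - (n:ℝ)/2 * (midRank n x i 1 - 1/2)
          + (n:ℝ)^2/4 := fun i => by ring
    rw [Finset.sum_congr rfl fun i _ => e1 i, Finset.sum_add_distrib, Finset.sum_sub_distrib,
      Finset.sum_sub_distrib, ← Finset.mul_sum, ← Finset.mul_sum, Finset.sum_const,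
      Finset.card_univ, Fintype.card_fin, nsmul_eq_mul, hs0, hs1, ← hT]
    ring
  have h2 : ∑ i : Fin n, (1 - (midRank n x i 0 - 1/2)/n) * (1 - (midRank n x i 1 - 1/2)/n)
      = T/(n:ℝ)^2 := by
    have e2 : ∀ i : Fin n, (1 - (midRank n x i 0 - 1/2)/n) * (1 - (midRank n x i 1 - 1/2)/n)
        = 1 - (midRank n x i 0 - 1/2)/n - (midRank n x i 1 - 1/2)/n
          + (midRank n x i 0 - 1/2) * (midRank n x i 1 - 1/2)/(n:ℝ)^2 := fun i => by ring
    rw [Finset.sum_congr rfl fun i _ => e2 i, Finset.sum_add_distrib, Finset.sum_sub_distrib,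
      Finset.sum_sub_distrib, ← Finset.sum_div, ← Finset.sum_div, ← Finset.sum_div,
      Finset.sum_const, Finset.card_univ, Fintype.card_fin, nsmul_eq_mul, hs0, hs1, ← hT]
    field_simp
    ring
  rw [h1, h2]
  field_simp
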